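/- Barr's theorem, proof-theoretic form: if T is an ∞-geometric theory and G is an ∞-geometric implication such that G is classically derivable from T in L_{∞ω}, then G is intuitionistically derivable from T. -/

import Mathlib

/-! A deep embedding of the infinitary language `L_{∞ω}` (de Bruijn indices for
bound variables, natural numbers naming free variables and predicate symbols),
together with Tait–Gentzen sequent calculi: a classical one with ordinal bounds
on proof-height and cut-rank, and an intuitionistic one (at most one succedent
formula). -/

/-- Terms: just variables. -/
inductive Tm : Type where
  | var : ℕ → Tm

/-- Formulae of `L_{∞ω}`: atoms, `∧`, `∨`, `→`, `¬`, `∀`, `∃` and set-indexed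
infinitary conjunctions `⋀` and disjunctions `⋁`. -/
inductive Fml : Type 1 where
  | atom : ℕ → List Tm → Fml
  | and : Fml → Fml → Fml
  | or : Fml → Fml → Fml
  | imp : Fml → Fml → Fml
  | neg : Fml → Fml
  | all : Fml → Fml
  | ex : Fml → Fml
  | conj : (ι : Type) → (ι → Fml) → Fml
  | disj : (ι : Type) → (ι → Fml) → Fml

namespace Fml

/-- The (ordinal) rank of a formula; proper subformulae have strictly smaller rank. -/
noncomputable def rank : Fml → Ordinal.{0}
  | atom _ _ => 0
  | and A B => max A.rank B.rank + 1
  | or A B => max A.rank B.rank + 1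
  | imp A B => max A.rank B.rank + 1
  | neg A => A.rank + 1
  | all A => A.rank + 1
  | ex A => A.rank + 1
  | conj _ f => Ordinal.lsub fun i => (f i).rank
  | disj _ f => Ordinal.lsub fun i => (f i).rank

end Fml

/-- Substitution in terms. -/
def Tm.subst (σ : ℕ → Tm) : Tm → Tm
  | .var n => σ n

/-- Lifting a substitution under a binder. -/
def liftSub (σ : ℕ → Tm) : ℕ → Tm
  | 0 => .var 0
  | n + 1 => match σ n with | .var m => .var (m + 1)

/-- Simultaneous substitution in formulae. -/
def Fml.subst (σ : ℕ → Tm) : Fml → Fml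
  | .atom p ts => .atom p (ts.map (Tm.subst σ))
  | .and A B => .and (A.subst σ) (B.subst σ)
  | .or A B => .or (A.subst σ) (B.subst σ)
  | .imp A B => .imp (A.subst σ) (B.subst σ)
  | .neg A => .neg (A.subst σ)
  | .all A => .all (A.subst (liftSub σ))
  | .ex A => .ex (A.subst (liftSub σ))
  | .conj ι f => .conj ι fun i => (f i).subst σ
  | .disj ι f => .disj ι fun i => (f i).subst σ

/-- `A.subst0 t` plugs the term `t` for the outermost bound variable of `A`;
if `B(x) = all A` then `B(t) = A.subst0 t`. -/
def Fml.subst0 (A : Fml) (t : Tm) : Fml :=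
  A.subst fun n => match n with | 0 => t | n + 1 => .var n

/-- Substituting the term `t` for the free variable `a`. -/
def Fml.substFree (A : Fml) (a : ℕ) (t : Tm) : Fml :=
  A.subst fun n => if n = a then t else .var n

/-- Free variables of a term. -/
def Tm.fv : Tm → Set ℕ
  | .var n => {n}

/-- Free variables of a formula. -/
def Fml.fv : Fml → Set ℕ
  | .atom _ ts => {n | ∃ t ∈ ts, n ∈ t.fv}
  | .and A B => A.fv ∪ B.fv
  | .or A B => A.fv ∪ B.fv
  | .imp A B => A.fv ∪ B.fv
  | .neg A => A.fv
  | .all A => {n | n + 1 ∈ A.fv}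
  | .ex A => {n | n + 1 ∈ A.fv}
  | .conj _ f => {n | ∃ i, n ∈ (f i).fv}
  | .disj _ f => {n | ∃ i, n ∈ (f i).fv}

/-- A sentence: a formula without free variables. -/
def Fml.Closed (A : Fml) : Prop := A.fv = ∅

/-- The classical sequent calculus for `L_{∞ω}`: `Derives α ρ Γ Δ` means the sequent
`Γ ⊢ Δ` has a derivation of height `≤ α` all of whose cut formulae have rank `< ρ`. -/
inductive Derives : Ordinal.{0} → Ordinal.{0} → List Fml → List Fml → Prop where
  | ax {α ρ Γ Δ A} : A ∈ Γ → A ∈ Δ → Derives α ρ Γ Δ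
  | wk {α ρ Γ Γ' Δ Δ'} : (∀ A ∈ Γ, A ∈ Γ') → (∀ A ∈ Δ, A ∈ Δ') →
      Derives α ρ Γ Δ → Derives α ρ Γ' Δ'
  | cut {α ρ Γ Δ C β₁ β₂} : β₁ < α → β₂ < α → Fml.rank C < ρ →
      Derives β₁ ρ Γ (C :: Δ) → Derives β₂ ρ (C :: Γ) Δ → Derives α ρ Γ Δ
  | negL {α ρ Γ Δ A β} : β < α → Derives β ρ Γ (A :: Δ) →
      Derives α ρ (.neg A :: Γ) Δ
  | negR {α ρ Γ Δ A β} : β < α → Derives β ρ (A :: Γ) Δ →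
      Derives α ρ Γ (.neg A :: Δ)
  | impL {α ρ Γ Δ A B β₁ β₂} : β₁ < α → β₂ < α →
      Derives β₁ ρ Γ (A :: Δ) → Derives β₂ ρ (B :: Γ) Δ →
      Derives α ρ (.imp A B :: Γ) Δ
  | impR {α ρ Γ Δ A B β} : β < α → Derives β ρ (A :: Γ) (B :: Δ) →
      Derives α ρ Γ (.imp A B :: Δ)
  | andL₁ {α ρ Γ Δ A B β} : β < α → Derives β ρ (A :: Γ) Δ →
      Derives α ρ (.and A B :: Γ) Δ
  | andL₂ {α ρ Γ Δ A B β} : β < α → Derives β ρ (B :: Γ) Δ →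
      Derives α ρ (.and A B :: Γ) Δ
  | andR {α ρ Γ Δ A B β₁ β₂} : β₁ < α → β₂ < α →
      Derives β₁ ρ Γ (A :: Δ) → Derives β₂ ρ Γ (B :: Δ) →
      Derives α ρ Γ (.and A B :: Δ)
  | orL {α ρ Γ Δ A B β₁ β₂} : β₁ < α → β₂ < α →
      Derives β₁ ρ (A :: Γ) Δ → Derives β₂ ρ (B :: Γ) Δ →
      Derives α ρ (.or A B :: Γ) Δ
  | orR₁ {α ρ Γ Δ A B β} : β < α → Derives β ρ Γ (A :: Δ) →
      Derives α ρ Γ (.or A B :: Δ)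
  | orR₂ {α ρ Γ Δ A B β} : β < α → Derives β ρ Γ (B :: Δ) →
      Derives α ρ Γ (.or A B :: Δ)
  | allL {α ρ Γ Δ A t β} : β < α → Derives β ρ (A.subst0 t :: Γ) Δ →
      Derives α ρ (.all A :: Γ) Δ
  | allR {α ρ Γ Δ A a β} : β < α → a ∉ Fml.fv (.all A) →
      (∀ B ∈ Γ, a ∉ B.fv) → (∀ B ∈ Δ, a ∉ B.fv) →
      Derives β ρ Γ (A.subst0 (.var a) :: Δ) → Derives α ρ Γ (.all A :: Δ)
  | exL {α ρ Γ Δ A a β} : β < α → a ∉ Fml.fv (.ex A) →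
      (∀ B ∈ Γ, a ∉ B.fv) → (∀ B ∈ Δ, a ∉ B.fv) →
      Derives β ρ (A.subst0 (.var a) :: Γ) Δ → Derives α ρ (.ex A :: Γ) Δ
  | exR {α ρ Γ Δ A t β} : β < α → Derives β ρ Γ (A.subst0 t :: Δ) →
      Derives α ρ Γ (.ex A :: Δ)
  | conjL {α ρ Γ Δ ι f β} (i : ι) : β < α → Derives β ρ (f i :: Γ) Δ →
      Derives α ρ (.conj ι f :: Γ) Δ
  | conjR {α ρ Γ Δ ι f} (β : ι → Ordinal.{0}) : (∀ i, β i < α) →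
      (∀ i : ι, Derives (β i) ρ Γ (f i :: Δ)) → Derives α ρ Γ (.conj ι f :: Δ)
  | disjL {α ρ Γ Δ ι f} (β : ι → Ordinal.{0}) : (∀ i, β i < α) →
      (∀ i : ι, Derives (β i) ρ (f i :: Γ) Δ) → Derives α ρ (.disj ι f :: Γ) Δ
  | disjR {α ρ Γ Δ ι f β} (i : ι) : β < α → Derives β ρ Γ (f i :: Δ) →
      Derives α ρ Γ (.disj ι f :: Δ)

/-- Classical derivability (with some height and some cut-rank). -/
def Derivable (Γ Δ : List Fml) : Prop := ∃ α ρ, Derives α ρ Γ Δ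

/-- The intuitionistic sequent calculus for `L_{∞ω}`: sequents have at most one
formula on the right (`none` = empty succedent). -/
inductive DerivesI : List Fml → Option Fml → Prop where
  | ax {Γ A} : A ∈ Γ → DerivesI Γ (some A)
  | wk {Γ Γ' S} : (∀ A ∈ Γ, A ∈ Γ') → DerivesI Γ S → DerivesI Γ' S
  | wkR {Γ A} : DerivesI Γ none → DerivesI Γ (some A)
  | cut {Γ S C} : DerivesI Γ (some C) → DerivesI (C :: Γ) S → DerivesI Γ S
  | negL {Γ A} : DerivesI Γ (some A) → DerivesI (.neg A :: Γ) none
  | negR {Γ A} : DerivesI (A :: Γ) none → DerivesI Γ (some (.neg A))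
  | impL {Γ S A B} : DerivesI Γ (some A) → DerivesI (B :: Γ) S →
      DerivesI (.imp A B :: Γ) S
  | impR {Γ A B} : DerivesI (A :: Γ) (some B) → DerivesI Γ (some (.imp A B))
  | andL₁ {Γ S A B} : DerivesI (A :: Γ) S → DerivesI (.and A B :: Γ) S
  | andL₂ {Γ S A B} : DerivesI (B :: Γ) S → DerivesI (.and A B :: Γ) S
  | andR {Γ A B} : DerivesI Γ (some A) → DerivesI Γ (some B) →
      DerivesI Γ (some (.and A B))
  | orL {Γ S A B} : DerivesI (A :: Γ) S → DerivesI (B :: Γ) S →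
      DerivesI (.or A B :: Γ) S
  | orR₁ {Γ A B} : DerivesI Γ (some A) → DerivesI Γ (some (.or A B))
  | orR₂ {Γ A B} : DerivesI Γ (some B) → DerivesI Γ (some (.or A B))
  | allL {Γ S A t} : DerivesI (A.subst0 t :: Γ) S → DerivesI (.all A :: Γ) S
  | allR {Γ A a} : a ∉ Fml.fv (.all A) → (∀ B ∈ Γ, a ∉ B.fv) →
      DerivesI Γ (some (A.subst0 (.var a))) → DerivesI Γ (some (.all A))
  | exL {Γ S A a} : a ∉ Fml.fv (.ex A) → (∀ B ∈ Γ, a ∉ B.fv) →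
      (∀ B, S = some B → a ∉ B.fv) →
      DerivesI (A.subst0 (.var a) :: Γ) S → DerivesI (.ex A :: Γ) S
  | exR {Γ A t} : DerivesI Γ (some (A.subst0 t)) → DerivesI Γ (some (.ex A))
  | conjL {Γ S ι f} (i : ι) : DerivesI (f i :: Γ) S → DerivesI (.conj ι f :: Γ) S
  | conjR {Γ ι f} : (∀ i : ι, DerivesI Γ (some (f i))) →
      DerivesI Γ (some (.conj ι f))
  | disjL {Γ S ι f} : (∀ i : ι, DerivesI (f i :: Γ) S) →
      DerivesI (.disj ι f :: Γ) S
  | disjR {Γ ι f} (i : ι) : DerivesI Γ (some (f i)) → DerivesI Γ (some (.disj ι f))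

/-- `⋁(Φ ∪ {A})` for an (indexed) set `Φ` of formulae and a formula `A`. -/
def Fml.disjInsert (A : Fml) {ι : Type} (f : ι → Fml) : Fml :=
  .disj (Option ι) fun o => o.elim A f

/-- `⋁Δ` for a finite list `Δ` of formulae. -/
def Fml.disjList (Δ : List Fml) : Fml :=
  .disj (Fin Δ.length) Δ.get

/-- `∞`-geometric formulae: built from atoms by `∧`, `∨`, `∃` and infinitary `⋁`. -/
inductive IsGeom : Fml → Prop where
  | atom (p ts) : IsGeom (.atom p ts)
  | and {A B} : IsGeom A → IsGeom B → IsGeom (.and A B)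
  | or {A B} : IsGeom A → IsGeom B → IsGeom (.or A B)
  | ex {A} : IsGeom A → IsGeom (.ex A)
  | disj {ι f} : (∀ i : ι, IsGeom (f i)) → IsGeom (.disj ι f)

/-- `∞`-geometric implications: generated from `A`, `¬A`, `A → B` (with `A`, `B`
`∞`-geometric) by `∀` and infinitary `⋀`. -/
inductive IsGeomImp : Fml → Prop where
  | base {A} : IsGeom A → IsGeomImp A
  | neg {A} : IsGeom A → IsGeomImp (.neg A)
  | imp {A B} : IsGeom A → IsGeom B → IsGeomImp (.imp A B)
  | all {A} : IsGeomImp A → IsGeomImp (.all A)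
  | conj {ι f} : (∀ i : ι, IsGeomImp (f i)) → IsGeomImp (.conj ι f)


/-! ### Auxiliary development for Barr's theorem -/

namespace Barr

open Fml

/-- Renaming as a substitution. -/
def ren (e : ℕ → ℕ) : ℕ → Tm := fun n => .var (e n)

lemma liftSub_comp (σ τ : ℕ → Tm) (n : ℕ) :
    (liftSub σ n).subst (liftSub τ) = liftSub (fun k => (σ k).subst τ) n := by
  cases n with
  | zero => rfl
  | succ k =>
    cases hσ : σ k with
    | var m =>
      cases hτ : τ m with
      | var j => simp [liftSub, hσ, Tm.subst, hτ]

lemma subst_subst (A : Fml) : ∀ σ τ : ℕ → Tm,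
    (A.subst σ).subst τ = A.subst (fun n => (σ n).subst τ) := by
  have tm : ∀ (σ τ : ℕ → Tm) (t : Tm),
      Tm.subst τ (Tm.subst σ t) = Tm.subst (fun n => (σ n).subst τ) t := by
    intro σ τ t; cases t; rfl
  induction A with
  | atom p ts =>
      intro σ τ
      simp [Fml.subst, List.map_map, Function.comp_def, tm]
  | and A B ihA ihB => intro σ τ; simp [Fml.subst, ihA, ihB]
  | or A B ihA ihB => intro σ τ; simp [Fml.subst, ihA, ihB]
  | imp A B ihA ihB => intro σ τ; simp [Fml.subst, ihA, ihB]
  | neg A ihA => intro σ τ; simp [Fml.subst, ihA]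
  | all A ihA =>
      intro σ τ
      simp only [Fml.subst, ihA]
      rw [show (fun n => Tm.subst (liftSub τ) (liftSub σ n))
            = liftSub (fun n => Tm.subst τ (σ n)) from funext (liftSub_comp σ τ)]
  | ex A ihA =>
      intro σ τ
      simp only [Fml.subst, ihA]
      rw [show (fun n => Tm.subst (liftSub τ) (liftSub σ n))
            = liftSub (fun n => Tm.subst τ (σ n)) from funext (liftSub_comp σ τ)]
  | conj ι f ih => intro σ τ; simp only [Fml.subst]; congr 1; funext i; exact ih i σ τ
  | disj ι f ih => intro σ τ; simp only [Fml.subst]; congr 1; funext i; exact ih i σ τ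

lemma subst_congr (A : Fml) : ∀ σ τ : ℕ → Tm, (∀ n ∈ A.fv, σ n = τ n) →
    A.subst σ = A.subst τ := by
  induction A with
  | atom p ts =>
      intro σ τ h
      simp only [Fml.subst]
      congr 1
      apply List.map_congr_left
      intro t ht
      cases t with
      | var n => exact h n ⟨_, ht, rfl⟩
  | and A B ihA ihB =>
      intro σ τ h
      simp only [Fml.subst]
      rw [ihA σ τ (fun n hn => h n (Or.inl hn)), ihB σ τ (fun n hn => h n (Or.inr hn))]
  | or A B ihA ihB =>
      intro σ τ h
      simp only [Fml.subst]
      rw [ihA σ τ (fun n hn => h n (Or.inl hn)), ihB σ τ (fun n hn => h n (Or.inr hn))]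
  | imp A B ihA ihB =>
      intro σ τ h
      simp only [Fml.subst]
      rw [ihA σ τ (fun n hn => h n (Or.inl hn)), ihB σ τ (fun n hn => h n (Or.inr hn))]
  | neg A ihA =>
      intro σ τ h
      simp only [Fml.subst]
      rw [ihA σ τ h]
  | all A ihA =>
      intro σ τ h
      simp only [Fml.subst]
      have hh : ∀ n ∈ A.fv, liftSub σ n = liftSub τ n := by
        intro n hn
        cases n with
        | zero => rfl
        | succ k =>
            have hk := h k hn
            simp [liftSub, hk]
      rw [ihA (liftSub σ) (liftSub τ) hh]
  | ex A ihA =>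
      intro σ τ h
      simp only [Fml.subst]
      have hh : ∀ n ∈ A.fv, liftSub σ n = liftSub τ n := by
        intro n hn
        cases n with
        | zero => rfl
        | succ k =>
            have hk := h k hn
            simp [liftSub, hk]
      rw [ihA (liftSub σ) (liftSub τ) hh]
  | conj ι f ih =>
      intro σ τ h
      simp only [Fml.subst]
      congr 1
      funext i
      exact ih i σ τ (fun n hn => h n ⟨i, hn⟩)
  | disj ι f ih =>
      intro σ τ h
      simp only [Fml.subst]
      congr 1
      funext i
      exact ih i σ τ (fun n hn => h n ⟨i, hn⟩)

lemma subst_id (A : Fml) : A.subst (fun n => .var n) = A := by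
  have lift : liftSub (fun n => .var n) = fun n => .var n := by
    funext n; cases n <;> rfl
  induction A with
  | atom p ts =>
      have tm : ∀ t : Tm, Tm.subst (fun n => .var n) t = t := by
        intro t; cases t; rfl
      simp only [Fml.subst]
      rw [(List.map_congr_left fun t _ => tm t).trans (List.map_id ts)]
  | and A B ihA ihB => simp [Fml.subst, ihA, ihB]
  | or A B ihA ihB => simp [Fml.subst, ihA, ihB]
  | imp A B ihA ihB => simp [Fml.subst, ihA, ihB]
  | neg A ihA => simp [Fml.subst, ihA]
  | all A ihA => simp [Fml.subst, lift, ihA]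
  | ex A ihA => simp [Fml.subst, lift, ihA]
  | conj ι f ih => simp only [Fml.subst]; congr 1; funext i; exact ih i
  | disj ι f ih => simp only [Fml.subst]; congr 1; funext i; exact ih i

lemma mem_fv_subst (A : Fml) : ∀ (σ : ℕ → Tm) (m : ℕ),
    m ∈ (A.subst σ).fv ↔ ∃ n ∈ A.fv, m ∈ (σ n).fv := by
  induction A with
  | atom p ts =>
      intro σ m
      simp only [Fml.subst, Fml.fv, Set.mem_setOf_eq, List.mem_map]
      constructor
      · rintro ⟨t, ⟨t0, ht0, rfl⟩, hm⟩
        cases t0 with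
        | var n => exact ⟨n, ⟨_, ht0, rfl⟩, hm⟩
      · rintro ⟨n, ⟨t0, ht0, hn⟩, hm⟩
        cases t0 with
        | var k =>
            have hk : n = k := hn
            subst hk
            exact ⟨σ n, ⟨_, ht0, rfl⟩, hm⟩
  | and A B ihA ihB =>
      intro σ m
      simp only [Fml.subst, Fml.fv, Set.mem_union, ihA, ihB]
      constructor
      · rintro (⟨n, hn, hm⟩ | ⟨n, hn, hm⟩)
        exacts [⟨n, Or.inl hn, hm⟩, ⟨n, Or.inr hn, hm⟩]
      · rintro ⟨n, hn | hn, hm⟩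
        exacts [Or.inl ⟨n, hn, hm⟩, Or.inr ⟨n, hn, hm⟩]
  | or A B ihA ihB =>
      intro σ m
      simp only [Fml.subst, Fml.fv, Set.mem_union, ihA, ihB]
      constructor
      · rintro (⟨n, hn, hm⟩ | ⟨n, hn, hm⟩)
        exacts [⟨n, Or.inl hn, hm⟩, ⟨n, Or.inr hn, hm⟩]
      · rintro ⟨n, hn | hn, hm⟩
        exacts [Or.inl ⟨n, hn, hm⟩, Or.inr ⟨n, hn, hm⟩]
  | imp A B ihA ihB =>
      intro σ m
      simp only [Fml.subst, Fml.fv, Set.mem_union, ihA, ihB]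
      constructor
      · rintro (⟨n, hn, hm⟩ | ⟨n, hn, hm⟩)
        exacts [⟨n, Or.inl hn, hm⟩, ⟨n, Or.inr hn, hm⟩]
      · rintro ⟨n, hn | hn, hm⟩
        exacts [Or.inl ⟨n, hn, hm⟩, Or.inr ⟨n, hn, hm⟩]
  | neg A ihA => intro σ m; exact ihA σ m
  | all A ihA =>
      intro σ m
      simp only [Fml.subst, Fml.fv, Set.mem_setOf_eq, ihA]
      constructor
      · rintro ⟨n, hn, hm⟩
        cases n with
        | zero =>
            exact absurd (show m + 1 = 0 from hm) (Nat.succ_ne_zero m)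
        | succ k =>
            cases hσ : σ k with
            | var j =>
                simp only [liftSub, hσ, Tm.fv, Set.mem_singleton_iff] at hm
                refine ⟨k, hn, ?_⟩
                rw [hσ]
                simp only [Tm.fv, Set.mem_singleton_iff]
                omega
      · rintro ⟨n, hn, hm⟩
        refine ⟨n + 1, hn, ?_⟩
        cases hσ : σ n with
        | var j =>
            rw [hσ] at hm
            simp only [Tm.fv, Set.mem_singleton_iff] at hm
            simp [liftSub, hσ, Tm.fv, hm]
  | ex A ihA =>
      intro σ m
      simp only [Fml.subst, Fml.fv, Set.mem_setOf_eq, ihA]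
      constructor
      · rintro ⟨n, hn, hm⟩
        cases n with
        | zero =>
            exact absurd (show m + 1 = 0 from hm) (Nat.succ_ne_zero m)
        | succ k =>
            cases hσ : σ k with
            | var j =>
                simp only [liftSub, hσ, Tm.fv, Set.mem_singleton_iff] at hm
                refine ⟨k, hn, ?_⟩
                rw [hσ]
                simp only [Tm.fv, Set.mem_singleton_iff]
                omega
      · rintro ⟨n, hn, hm⟩
        refine ⟨n + 1, hn, ?_⟩
        cases hσ : σ n with
        | var j =>
            rw [hσ] at hm
            simp only [Tm.fv, Set.mem_singleton_iff] at hm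
            simp [liftSub, hσ, Tm.fv, hm]
  | conj ι f ih =>
      intro σ m
      simp only [Fml.subst, Fml.fv, Set.mem_setOf_eq, ih]
      constructor
      · rintro ⟨i, n, hn, hm⟩; exact ⟨n, ⟨i, hn⟩, hm⟩
      · rintro ⟨n, ⟨i, hn⟩, hm⟩; exact ⟨i, n, hn, hm⟩
  | disj ι f ih =>
      intro σ m
      simp only [Fml.subst, Fml.fv, Set.mem_setOf_eq, ih]
      constructor
      · rintro ⟨i, n, hn, hm⟩; exact ⟨n, ⟨i, hn⟩, hm⟩
      · rintro ⟨n, ⟨i, hn⟩, hm⟩; exact ⟨i, n, hn, hm⟩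


/-- The cons of a term onto a substitution. -/
def consSub (t : Tm) (σ : ℕ → Tm) : ℕ → Tm
  | 0 => t
  | n + 1 => σ n

lemma subst0_eq (A : Fml) (t : Tm) : A.subst0 t = A.subst (consSub t (fun n => .var n)) := by
  unfold Fml.subst0
  have : (fun n => match n with | 0 => t | (n+1) => Tm.var n) = consSub t (fun n => .var n) := by
    funext n
    cases n <;> rfl
  rw [this]

lemma subst_liftSub_subst0 (A : Fml) (σ : ℕ → Tm) (t : Tm) :
    (A.subst (liftSub σ)).subst0 t = A.subst (consSub t σ) := by
  rw [subst0_eq, subst_subst]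
  congr 1
  funext n
  cases n with
  | zero => rfl
  | succ k =>
      cases hσ : σ k with
      | var m => simp [liftSub, hσ, Tm.subst, consSub]

lemma subst0_subst (A : Fml) (σ : ℕ → Tm) (t : Tm) :
    (A.subst0 t).subst σ = (A.subst (liftSub σ)).subst0 (t.subst σ) := by
  rw [subst_liftSub_subst0, subst0_eq, subst_subst]
  congr 1
  funext n
  cases n <;> rfl

/-- Shift all variables up by one. -/
def shift (A : Fml) : Fml := A.subst fun n => .var (n + 1)

lemma shift_subst (R : Fml) (σ : ℕ → Tm) :
    (shift R).subst (liftSub σ) = shift (R.subst σ) := by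
  unfold shift
  rw [subst_subst, subst_subst]
  have : (fun n => (Tm.var (n+1)).subst (liftSub σ)) = fun n => (σ n).subst fun k => Tm.var (k+1) := by
    funext n
    cases hσ : σ n with
    | var m => simp [Tm.subst, liftSub, hσ]
  rw [this]

lemma shift_subst0 (R : Fml) (t : Tm) : (shift R).subst0 t = R := by
  unfold shift
  rw [subst0_eq, subst_subst]
  have : (fun n => (Tm.var (n+1)).subst (consSub t fun k => .var k)) = fun n => Tm.var n := by
    funext n; rfl
  rw [this, subst_id]

lemma mem_fv_shift (R : Fml) (m : ℕ) : m ∈ (shift R).fv ↔ ∃ n ∈ R.fv, m = n + 1 := by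
  unfold shift
  rw [mem_fv_subst]
  constructor
  · rintro ⟨n, hn, hm⟩
    exact ⟨n, hn, hm⟩
  · rintro ⟨n, hn, rfl⟩
    exact ⟨n, hn, rfl⟩

/-- `R`-relative double negation. -/
def dneg (R X : Fml) : Fml := .imp (.imp X R) R

/-- The Friedman–Kuroda translation relative to `R`. -/
def tr : Fml → Fml → Fml
  | R, .atom p ts => .or (.atom p ts) R
  | R, .and A B => .and (tr R A) (tr R B)
  | R, .or A B => .or (tr R A) (tr R B)
  | R, .imp A B => .imp (tr R A) (tr R B)
  | R, .neg A => .imp (tr R A) R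
  | R, .all A => .all (dneg (shift R) (tr (shift R) A))
  | R, .ex A => .ex (tr (shift R) A)
  | R, .conj ι f => .conj ι fun i => dneg R (tr R (f i))
  | R, .disj ι f => .disj (Option ι) fun o => o.elim R (fun i => tr R (f i))

lemma tr_subst (A : Fml) : ∀ (R : Fml) (σ : ℕ → Tm),
    (tr R A).subst σ = tr (R.subst σ) (A.subst σ) := by
  induction A with
  | atom p ts => intro R σ; simp [tr, Fml.subst]
  | and A B ihA ihB => intro R σ; simp [tr, Fml.subst, ihA, ihB]
  | or A B ihA ihB => intro R σ; simp [tr, Fml.subst, ihA, ihB]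
  | imp A B ihA ihB => intro R σ; simp [tr, Fml.subst, ihA, ihB]
  | neg A ihA => intro R σ; simp [tr, Fml.subst, ihA]
  | all A ihA =>
      intro R σ
      simp only [tr, Fml.subst, dneg, ihA, shift_subst]
  | ex A ihA =>
      intro R σ
      simp only [tr, Fml.subst, ihA, shift_subst]
  | conj ι f ih =>
      intro R σ
      simp only [tr, Fml.subst, dneg]
      congr 1
      funext i
      rw [ih i]
  | disj ι f ih =>
      intro R σ
      simp only [tr, Fml.subst]
      congr 1
      funext o
      cases o with
      | none => rfl
      | some i => simp only [Option.elim]; rw [ih i]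

lemma mem_fv_tr (A : Fml) : ∀ (R : Fml) (m : ℕ),
    m ∈ (tr R A).fv → m ∈ A.fv ∨ m ∈ R.fv := by
  induction A with
  | atom p ts => intro R m h; exact h
  | and A B ihA ihB =>
      intro R m h
      rcases h with h | h
      · rcases ihA R m h with h' | h'
        exacts [Or.inl (Or.inl h'), Or.inr h']
      · rcases ihB R m h with h' | h'
        exacts [Or.inl (Or.inr h'), Or.inr h']
  | or A B ihA ihB =>
      intro R m h
      rcases h with h | h
      · rcases ihA R m h with h' | h'
        exacts [Or.inl (Or.inl h'), Or.inr h']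
      · rcases ihB R m h with h' | h'
        exacts [Or.inl (Or.inr h'), Or.inr h']
  | imp A B ihA ihB =>
      intro R m h
      rcases h with h | h
      · rcases ihA R m h with h' | h'
        exacts [Or.inl (Or.inl h'), Or.inr h']
      · rcases ihB R m h with h' | h'
        exacts [Or.inl (Or.inr h'), Or.inr h']
  | neg A ihA =>
      intro R m h
      rcases h with h | h
      · rcases ihA R m h with h' | h'
        exacts [Or.inl h', Or.inr h']
      · exact Or.inr h
  | all A ihA =>
      intro R m h
      have h' : m + 1 ∈ (Fml.imp (Fml.imp (tr (shift R) A) (shift R)) (shift R)).fv := h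
      have hsh : ∀ k : ℕ, k + 1 ∈ (shift R).fv → k ∈ R.fv := by
        intro k hk
        rw [mem_fv_shift] at hk
        obtain ⟨n, hn, he⟩ := hk
        have : k = n := by omega
        rw [this]; exact hn
      rcases h' with (h' | h') | h'
      · rcases ihA (shift R) (m + 1) h' with h'' | h''
        · exact Or.inl h''
        · exact Or.inr (hsh m h'')
      · exact Or.inr (hsh m h')
      · exact Or.inr (hsh m h')
  | ex A ihA =>
      intro R m h
      have h' : m + 1 ∈ (tr (shift R) A).fv := h
      have hsh : ∀ k : ℕ, k + 1 ∈ (shift R).fv → k ∈ R.fv := by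
        intro k hk
        rw [mem_fv_shift] at hk
        obtain ⟨n, hn, he⟩ := hk
        have : k = n := by omega
        rw [this]; exact hn
      rcases ihA (shift R) (m + 1) h' with h'' | h''
      · exact Or.inl h''
      · exact Or.inr (hsh m h'')
  | conj ι f ih =>
      intro R m h
      obtain ⟨i, hi⟩ := h
      rcases hi with hi | hi
      · rcases hi with hi | hi
        · rcases ih i R m hi with h' | h'
          exacts [Or.inl ⟨i, h'⟩, Or.inr h']
        · exact Or.inr hi
      · exact Or.inr hi
  | disj ι f ih =>
      intro R m h
      obtain ⟨o, ho⟩ := h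
      cases o with
      | none => exact Or.inr ho
      | some i =>
          rcases ih i R m ho with h' | h'
          exacts [Or.inl ⟨i, h'⟩, Or.inr h']


/-! ### Classical calculus utilities -/

lemma ord_lt_add_one (a : Ordinal) : a < a + 1 := by
  rw [Ordinal.add_one_eq_succ]; exact Order.lt_succ a

theorem _root_.Derives.mono {α ρ Γ Δ} (h : Derives α ρ Γ Δ) :
    ∀ {α' ρ' : Ordinal}, α ≤ α' → ρ ≤ ρ' → Derives α' ρ' Γ Δ := by
  induction h with
  | ax h1 h2 => intro _ _ _ _; exact .ax h1 h2
  | wk h1 h2 _ ih => intro _ _ hα hρ; exact .wk h1 h2 (ih hα hρ)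
  | cut hβ₁ hβ₂ hC _ _ ih1 ih2 =>
      intro _ _ hα hρ
      exact .cut (hβ₁.trans_le hα) (hβ₂.trans_le hα) (hC.trans_le hρ)
        (ih1 le_rfl hρ) (ih2 le_rfl hρ)
  | negL hβ _ ih => intro _ _ hα hρ; exact .negL (hβ.trans_le hα) (ih le_rfl hρ)
  | negR hβ _ ih => intro _ _ hα hρ; exact .negR (hβ.trans_le hα) (ih le_rfl hρ)
  | impL hβ₁ hβ₂ _ _ ih1 ih2 =>
      intro _ _ hα hρ
      exact .impL (hβ₁.trans_le hα) (hβ₂.trans_le hα) (ih1 le_rfl hρ) (ih2 le_rfl hρ)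
  | impR hβ _ ih => intro _ _ hα hρ; exact .impR (hβ.trans_le hα) (ih le_rfl hρ)
  | andL₁ hβ _ ih => intro _ _ hα hρ; exact .andL₁ (hβ.trans_le hα) (ih le_rfl hρ)
  | andL₂ hβ _ ih => intro _ _ hα hρ; exact .andL₂ (hβ.trans_le hα) (ih le_rfl hρ)
  | andR hβ₁ hβ₂ _ _ ih1 ih2 =>
      intro _ _ hα hρ
      exact .andR (hβ₁.trans_le hα) (hβ₂.trans_le hα) (ih1 le_rfl hρ) (ih2 le_rfl hρ)
  | orL hβ₁ hβ₂ _ _ ih1 ih2 =>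
      intro _ _ hα hρ
      exact .orL (hβ₁.trans_le hα) (hβ₂.trans_le hα) (ih1 le_rfl hρ) (ih2 le_rfl hρ)
  | orR₁ hβ _ ih => intro _ _ hα hρ; exact .orR₁ (hβ.trans_le hα) (ih le_rfl hρ)
  | orR₂ hβ _ ih => intro _ _ hα hρ; exact .orR₂ (hβ.trans_le hα) (ih le_rfl hρ)
  | allL hβ _ ih => intro _ _ hα hρ; exact .allL (hβ.trans_le hα) (ih le_rfl hρ)
  | allR hβ ha hΓ hΔ _ ih =>
      intro _ _ hα hρ
      exact .allR (hβ.trans_le hα) ha hΓ hΔ (ih le_rfl hρ)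
  | exL hβ ha hΓ hΔ _ ih =>
      intro _ _ hα hρ
      exact .exL (hβ.trans_le hα) ha hΓ hΔ (ih le_rfl hρ)
  | exR hβ _ ih => intro _ _ hα hρ; exact .exR (hβ.trans_le hα) (ih le_rfl hρ)
  | conjL i hβ _ ih => intro _ _ hα hρ; exact .conjL i (hβ.trans_le hα) (ih le_rfl hρ)
  | conjR β hβ _ ih =>
      intro _ _ hα hρ
      exact .conjR β (fun i => (hβ i).trans_le hα) (fun i => ih i le_rfl hρ)
  | disjL β hβ _ ih =>
      intro _ _ hα hρ
      exact .disjL β (fun i => (hβ i).trans_le hα) (fun i => ih i le_rfl hρ)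
  | disjR i hβ _ ih => intro _ _ hα hρ; exact .disjR i (hβ.trans_le hα) (ih le_rfl hρ)

theorem _root_.Derivable.wk {Γ Γ' Δ Δ'} (h : Derivable Γ Δ)
    (hΓ : ∀ A ∈ Γ, A ∈ Γ') (hΔ : ∀ A ∈ Δ, A ∈ Δ') : Derivable Γ' Δ' := by
  obtain ⟨α, ρ, h⟩ := h
  exact ⟨α, ρ, .wk hΓ hΔ h⟩

theorem _root_.Derivable.cutF {Γ Δ C} (h1 : Derivable Γ (C :: Δ)) (h2 : Derivable (C :: Γ) Δ) :
    Derivable Γ Δ := by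
  obtain ⟨α₁, ρ₁, h1⟩ := h1
  obtain ⟨α₂, ρ₂, h2⟩ := h2
  refine ⟨max α₁ α₂ + 1, max (max ρ₁ ρ₂) (C.rank + 1),
    Derives.cut (C := C) (β₁ := α₁) (β₂ := α₂) ?_ ?_ ?_ ?_ ?_⟩
  · exact lt_of_le_of_lt (le_max_left _ _) (ord_lt_add_one (max α₁ α₂))
  · exact lt_of_le_of_lt (le_max_right _ _) (ord_lt_add_one (max α₁ α₂))
  · exact lt_of_lt_of_le (ord_lt_add_one C.rank) (le_max_right _ _)
  · exact h1.mono le_rfl ((le_max_left _ _).trans (le_max_left _ _))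
  · exact h2.mono le_rfl ((le_max_right _ _).trans (le_max_left _ _))

/-! ### Intuitionistic calculus utilities -/

theorem _root_.DerivesI.wk1 {Γ S B} (h : DerivesI Γ S) : DerivesI (B :: Γ) S :=
  .wk (fun _ hx => List.mem_cons_of_mem _ hx) h

theorem _root_.DerivesI.axm {Γ} {A : Fml} (h : A ∈ Γ) : DerivesI Γ (some A) := .ax h

theorem _root_.DerivesI.ax0 {Γ} {A : Fml} : DerivesI (A :: Γ) (some A) := .ax (List.mem_cons_self)

theorem _root_.DerivesI.impE {Γ} {A B : Fml} (h1 : DerivesI Γ (some (.imp A B)))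
    (h2 : DerivesI Γ (some A)) : DerivesI Γ (some B) :=
  h1.cut (.impL h2 .ax0)

theorem _root_.DerivesI.mpCtx {Γ} {A B : Fml} (h : Fml.imp A B ∈ Γ)
    (h2 : DerivesI Γ (some A)) : DerivesI Γ (some B) :=
  (DerivesI.axm h).impE h2


/-! ### The fresh-variable bookkeeping -/

def econs (c : ℕ) (e : ℕ → ℕ) : ℕ → ℕ
  | 0 => c
  | n + 1 => e n

lemma consSub_ren (c : ℕ) (e : ℕ → ℕ) :
    consSub (.var c) (ren e) = ren (econs c e) := by
  funext n; cases n <;> rfl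

lemma subst0_lift_ren (X : Fml) (e : ℕ → ℕ) (c : ℕ) :
    (X.subst (liftSub (ren e))).subst0 (.var c) = X.subst (ren (econs c e)) := by
  rw [subst_liftSub_subst0, consSub_ren]

lemma tr_subst0 (R A : Fml) (t : Tm) :
    (tr R A).subst0 t = tr (R.subst0 t) (A.subst0 t) := by
  unfold Fml.subst0; rw [tr_subst]

lemma dneg_subst0 (S Y : Fml) (t : Tm) :
    (dneg S Y).subst0 t = dneg (S.subst0 t) (Y.subst0 t) := rfl

lemma fv_subst_ren_subset (X : Fml) (e : ℕ → ℕ) :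
    (X.subst (ren e)).fv ⊆ Set.range e := by
  intro m hm
  rw [mem_fv_subst] at hm
  obtain ⟨n, _, hm⟩ := hm
  have : m = e n := hm
  exact ⟨n, this.symm⟩

lemma fv_tr_ren_subset (R X : Fml) (e : ℕ → ℕ) :
    (tr R (X.subst (ren e))).fv ⊆ Set.range e ∪ R.fv := by
  intro m hm
  rcases mem_fv_tr _ _ _ hm with h | h
  · exact Or.inl (fv_subst_ren_subset X e h)
  · exact Or.inr h

/-- The condition that infinitely many variables avoid both `e`'s range and `R`. -/
def Good (e : ℕ → ℕ) (R : Fml) : Prop :=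
  {n | n ∉ Set.range e ∧ n ∉ R.fv}.Infinite

lemma Good.fresh {e : ℕ → ℕ} {R : Fml} (h : Good e R) :
    ∃ c, c ∉ Set.range e ∧ c ∉ R.fv ∧ Good (econs c e) R := by
  obtain ⟨c, hc⟩ := h.nonempty
  refine ⟨c, hc.1, hc.2, ?_⟩
  have hsub : {n | n ∉ Set.range e ∧ n ∉ R.fv} \ {c} ⊆
      {n | n ∉ Set.range (econs c e) ∧ n ∉ R.fv} := by
    rintro n ⟨⟨hn1, hn2⟩, hn3⟩
    refine ⟨?_, hn2⟩
    rintro ⟨k, hk⟩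
    cases k with
    | zero => exact hn3 hk.symm
    | succ k => exact hn1 ⟨k, hk⟩
  exact ((h.diff (Set.finite_singleton c)).mono hsub)

/-! ### Ex falso for the translation -/

lemma efq (R : Fml) : ∀ (X : Fml) (e : ℕ → ℕ), Good e R →
    DerivesI [R] (some (tr R (X.subst (ren e)))) := by
  intro X
  induction X with
  | atom p ts =>
      intro e _
      exact .orR₂ .ax0
  | and A B ihA ihB =>
      intro e hG
      exact .andR (ihA e hG) (ihB e hG)
  | or A B ihA ihB =>
      intro e hG
      exact .orR₁ (ihA e hG)
  | imp A B ihA ihB =>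
      intro e hG
      exact .impR ((ihB e hG).wk1)
  | neg A ihA =>
      intro e _
      exact .impR (.axm (by simp))
  | all A ihA =>
      intro e hG
      obtain ⟨c, hc1, hc2, _⟩ := hG.fresh
      simp only [Fml.subst, tr]
      refine DerivesI.allR (a := c) ?_ ?_ ?_
      · intro hmem
        have hmem' : c ∈ Set.range e ∪ R.fv := fv_tr_ren_subset R (.all A) e hmem
        rcases hmem' with h | h
        · exact hc1 h
        · exact hc2 h
      · intro B hB
        have hB' : B = R := by simpa using hB
        subst hB'
        exact hc2
      · rw [dneg_subst0, shift_subst0, tr_subst0, shift_subst0, subst0_lift_ren]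
        exact .impR (.axm (by simp))
  | ex A ihA =>
      intro e hG
      obtain ⟨c, hc1, hc2, hG2⟩ := hG.fresh
      simp only [Fml.subst, tr]
      refine DerivesI.exR (t := .var c) ?_
      rw [tr_subst0, shift_subst0, subst0_lift_ren]
      exact ihA (econs c e) hG2
  | conj ι f ih =>
      intro e hG
      simp only [Fml.subst, tr]
      exact .conjR fun i => .impR (.axm (by simp))
  | disj ι f ih =>
      intro e hG
      simp only [Fml.subst, tr]
      exact .disjR none .ax0


theorem _root_.DerivesI.wkS {Γ S} {A : Fml} (h : DerivesI [A] S) (hA : A ∈ Γ) : DerivesI Γ S :=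
  h.wk (fun x hx => by rw [List.mem_singleton.mp hx]; exact hA)

/-! ### Geometric formulae and the translation -/

/-- A geometric formula intuitionistically implies its translation. -/
lemma geomIn (R : Fml) {X : Fml} (hX : IsGeom X) : ∀ e, Good e R →
    DerivesI [X.subst (ren e)] (some (tr R (X.subst (ren e)))) := by
  induction hX with
  | atom p ts =>
      intro e _
      exact .orR₁ .ax0
  | and hA hB ihA ihB =>
      intro e hG
      simp only [Fml.subst, tr]
      exact .andR ((DerivesI.andL₁ .ax0).cut ((ihA e hG).wkS (by simp)))
        ((DerivesI.andL₂ .ax0).cut ((ihB e hG).wkS (by simp)))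
  | or hA hB ihA ihB =>
      intro e hG
      simp only [Fml.subst, tr]
      exact .orL (.orR₁ (ihA e hG)) (.orR₂ (ihB e hG))
  | ex hA ihA =>
      intro e hG
      obtain ⟨c, hc1, hc2, hG2⟩ := hG.fresh
      rename_i A
      simp only [Fml.subst, tr]
      refine DerivesI.exL (a := c) ?_ ?_ ?_ ?_
      · intro hmem
        have : c ∈ Set.range e := fv_subst_ren_subset (.ex A) e hmem
        exact hc1 this
      · intro B hB
        simp at hB
      · intro B hB
        cases hB
        intro hmem
        have : c ∈ Set.range e ∪ R.fv := fv_tr_ren_subset R (.ex A) e hmem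
        rcases this with h | h
        · exact hc1 h
        · exact hc2 h
      · rw [subst0_lift_ren]
        refine (ihA (econs c e) hG2).cut ?_
        refine DerivesI.exR (t := .var c) ?_
        rw [tr_subst0, shift_subst0, subst0_lift_ren]
        exact .ax0
  | disj hf ih =>
      intro e hG
      simp only [Fml.subst, tr]
      exact .disjL fun i => .disjR (some i) (ih i e hG)

/-- The translation of a geometric formula intuitionistically implies it or `R`. -/
lemma geomOut (R : Fml) {X : Fml} (hX : IsGeom X) : ∀ e, Good e R →
    DerivesI [tr R (X.subst (ren e))] (some (.or (X.subst (ren e)) R)) := by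
  induction hX with
  | atom p ts =>
      intro e _
      exact .ax0
  | and hA hB ihA ihB =>
      intro e hG
      rename_i A B
      simp only [Fml.subst, tr]
      refine ((DerivesI.andL₁ .ax0).cut ((ihA e hG).wkS (by simp))).cut ?_
      refine .orL ?_ (.orR₂ .ax0)
      refine (((DerivesI.andL₂ .ax0).wk
        (fun x hx => List.mem_cons_of_mem _ hx)).cut ((ihB e hG).wkS (by simp))).cut ?_
      refine .orL ?_ (.orR₂ .ax0)
      exact .orR₁ (.andR (.axm (by simp)) (.axm (by simp)))
  | or hA hB ihA ihB =>
      intro e hG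
      simp only [Fml.subst, tr]
      refine .orL ?_ ?_
      · refine ((ihA e hG).wkS (by simp)).cut ?_
        exact .orL (.orR₁ (.orR₁ .ax0)) (.orR₂ .ax0)
      · refine ((ihB e hG).wkS (by simp)).cut ?_
        exact .orL (.orR₁ (.orR₂ .ax0)) (.orR₂ .ax0)
  | ex hA ihA =>
      intro e hG
      obtain ⟨c, hc1, hc2, hG2⟩ := hG.fresh
      rename_i A
      simp only [Fml.subst, tr]
      refine DerivesI.exL (a := c) ?_ ?_ ?_ ?_
      · intro hmem
        have : c ∈ Set.range e ∪ R.fv := fv_tr_ren_subset R (.ex A) e hmem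
        rcases this with h | h
        · exact hc1 h
        · exact hc2 h
      · intro B hB
        simp at hB
      · intro B hB
        cases hB
        intro hmem
        rcases hmem with h | h
        · exact hc1 (fv_subst_ren_subset (.ex A) e h)
        · exact hc2 h
      · rw [tr_subst0, shift_subst0, subst0_lift_ren]
        refine ((ihA (econs c e) hG2).wkS (by simp)).cut ?_
        refine .orL ?_ (.orR₂ .ax0)
        refine .orR₁ (DerivesI.exR (t := .var c) ?_)
        rw [subst0_lift_ren]
        exact .ax0
  | disj hf ih =>
      intro e hG
      rename_i ι f
      simp only [Fml.subst, tr]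
      refine .disjL fun o => ?_
      cases o with
      | none => exact .orR₂ .ax0
      | some i =>
          refine ((ih i e hG).wkS (by simp)).cut ?_
          refine .orL ?_ (.orR₂ .ax0)
          exact .orR₁ (.disjR i (.axm (by simp)))

/-- A geometric implication intuitionistically implies its translation. -/
lemma geomImp (R : Fml) {H : Fml} (hH : IsGeomImp H) : ∀ e, Good e R →
    DerivesI [H.subst (ren e)] (some (tr R (H.subst (ren e)))) := by
  induction hH with
  | base hX => exact geomIn R hX
  | neg hX =>
      intro e hG
      rename_i A
      simp only [Fml.subst, tr]
      refine .impR ?_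
      refine ((geomOut R hX e hG).wkS (by simp)).cut ?_
      refine .orL ?_ .ax0
      refine DerivesI.wk (Γ := [.neg (A.subst (ren e)), A.subst (ren e)]) ?_ ?_
      · intro x hx
        rcases List.mem_cons.mp hx with rfl | hx
        · simp
        · rcases List.mem_cons.mp hx with rfl | hx
          · simp
          · simp at hx
      · exact (DerivesI.negL (.axm (by simp))).wkR
  | imp hA hB =>
      intro e hG
      rename_i A B
      simp only [Fml.subst, tr]
      refine .impR ?_
      refine ((geomOut R hA e hG).wkS (by simp)).cut ?_
      refine .orL ?_ ?_
      · refine (DerivesI.mpCtx (A := A.subst (ren e)) (B := B.subst (ren e))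
          (by simp) (.axm (by simp))).cut ?_
        exact (geomIn R hB e hG).wkS (by simp)
      · exact (efq R B e hG).wkS (by simp)
  | all hH0 ih =>
      intro e hG
      obtain ⟨c, hc1, hc2, hG2⟩ := hG.fresh
      rename_i H0
      simp only [Fml.subst, tr]
      refine DerivesI.allR (a := c) ?_ ?_ ?_
      · intro hmem
        have : c ∈ Set.range e ∪ R.fv := fv_tr_ren_subset R (.all H0) e hmem
        rcases this with h | h
        · exact hc1 h
        · exact hc2 h
      · intro B hB
        rw [List.mem_singleton.mp hB]
        intro hmem
        exact hc1 (fv_subst_ren_subset (.all H0) e hmem)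
      · rw [dneg_subst0, shift_subst0, tr_subst0, shift_subst0, subst0_lift_ren]
        refine .impR ?_
        refine DerivesI.wk (Γ := [.all (H0.subst (liftSub (ren e))),
          .imp (tr R (H0.subst (ren (econs c e)))) R]) ?_ ?_
        · intro x hx
          rcases List.mem_cons.mp hx with rfl | hx
          · simp
          · rcases List.mem_cons.mp hx with rfl | hx
            · simp
            · simp at hx
        · refine DerivesI.allL (t := .var c) ?_
          rw [subst0_lift_ren]
          refine ((ih (econs c e) hG2).wkS (by simp)).cut ?_
          exact DerivesI.mpCtx (by simp) .ax0
  | conj hf ih =>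
      intro e hG
      rename_i ι f
      simp only [Fml.subst, tr]
      refine .conjR fun i => ?_
      refine .impR ?_
      refine DerivesI.wk (Γ := [Fml.conj ι (fun i => (f i).subst (ren e)),
        .imp (tr R ((f i).subst (ren e))) R]) ?_ ?_
      · intro x hx
        rcases List.mem_cons.mp hx with rfl | hx
        · simp
        · rcases List.mem_cons.mp hx with rfl | hx
          · simp
          · simp at hx
      · refine DerivesI.conjL i ?_
        refine ((ih i e hG).wkS (by simp)).cut ?_
        exact DerivesI.mpCtx (by simp) .ax0


/-! ### Exchange helpers and update bookkeeping -/

theorem _root_.DerivesI.exchange {L1 L2 : List Fml} {B S} (h : DerivesI (L1 ++ B :: L2) S) :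
    DerivesI (B :: (L1 ++ L2)) S := by
  refine h.wk ?_
  intro x hx
  rcases List.mem_append.mp hx with h1 | h2
  · exact List.mem_cons_of_mem _ (List.mem_append_left _ h1)
  · rcases List.mem_cons.mp h2 with rfl | h2
    · exact List.mem_cons_self
    · exact List.mem_cons_of_mem _ (List.mem_append_right _ h2)

theorem _root_.DerivesI.unexchange {L1 L2 : List Fml} {B S} (h : DerivesI (B :: (L1 ++ L2)) S) :
    DerivesI (L1 ++ B :: L2) S := by
  refine h.wk ?_
  intro x hx
  rcases List.mem_cons.mp hx with rfl | hx
  · exact List.mem_append_right _ (List.mem_cons_self)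
  · rcases List.mem_append.mp hx with h1 | h2
    · exact List.mem_append_left _ h1
    · exact List.mem_append_right _ (List.mem_cons_of_mem _ h2)

lemma Good.fresh_update {e : ℕ → ℕ} {R : Fml} (h : Good e R) (a : ℕ) :
    ∃ c, c ∉ Set.range e ∧ c ∉ R.fv ∧ Good (Function.update e a c) R := by
  obtain ⟨c, hc⟩ := h.nonempty
  refine ⟨c, hc.1, hc.2, ?_⟩
  have hsub : {n | n ∉ Set.range e ∧ n ∉ R.fv} \ {c} ⊆
      {n | n ∉ Set.range (Function.update e a c) ∧ n ∉ R.fv} := by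
    rintro n ⟨⟨hn1, hn2⟩, hn3⟩
    refine ⟨?_, hn2⟩
    rintro ⟨k, hk⟩
    by_cases hka : k = a
    · subst hka
      rw [Function.update_self] at hk
      exact hn3 hk.symm
    · rw [Function.update_of_ne hka] at hk
      exact hn1 ⟨k, hk⟩
  exact ((h.diff (Set.finite_singleton c)).mono hsub)

lemma ren_update_eq {a : ℕ} (B : Fml) (e : ℕ → ℕ) (c : ℕ) (ha : a ∉ B.fv) :
    B.subst (ren (Function.update e a c)) = B.subst (ren e) := by
  apply subst_congr
  intro n hn
  have : n ≠ a := fun h => ha (h ▸ hn)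
  simp [ren, Function.update_of_ne this]

lemma subst0_var_update (A : Fml) (e : ℕ → ℕ) (a c : ℕ) (ha : a + 1 ∉ A.fv) :
    (A.subst0 (.var a)).subst (ren (Function.update e a c))
      = (A.subst (liftSub (ren e))).subst0 (.var c) := by
  rw [subst0_subst]
  have h1 : (Tm.var a).subst (ren (Function.update e a c)) = Tm.var c := by
    simp [Tm.subst, ren, Function.update_self]
  rw [h1]
  congr 1
  apply subst_congr
  intro n hn
  cases n with
  | zero => rfl
  | succ k =>
      have hk : k ≠ a := fun h => ha (h ▸ hn)
      simp [liftSub, ren, Function.update_of_ne hk]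

lemma fv_ctx_subset (R : Fml) (e : ℕ → ℕ) (Γ Δ : List Fml) :
    ∀ B ∈ (Γ.map (fun A => tr R (A.subst (ren e)))
        ++ Δ.map (fun D => (tr R (D.subst (ren e))).imp R)),
      B.fv ⊆ Set.range e ∪ R.fv := by
  intro B hB
  rcases List.mem_append.mp hB with h | h
  · obtain ⟨X, _, rfl⟩ := List.mem_map.mp h
    exact fv_tr_ren_subset R X e
  · obtain ⟨X, _, rfl⟩ := List.mem_map.mp h
    intro m hm
    rcases hm with hm | hm
    · exact fv_tr_ren_subset R X e hm
    · exact Or.inr hm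


/-! ### The main translation lemma -/

theorem main (R : Fml) {α ρ : Ordinal} {Γ Δ : List Fml} (h : Derives α ρ Γ Δ) :
    ∀ (e : ℕ → ℕ), Good e R →
      DerivesI (Γ.map (fun A => tr R (A.subst (ren e)))
        ++ Δ.map (fun D => (tr R (D.subst (ren e))).imp R)) (some R) := by
  induction h with
  | @ax _ _ Γ Δ A hΓ hΔ =>
      intro e hG
      refine DerivesI.mpCtx (A := tr R (A.subst (ren e))) ?_ (.axm ?_)
      · exact List.mem_append_right _ (List.mem_map_of_mem hΔ)
      · exact List.mem_append_left _ (List.mem_map_of_mem hΓ)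
  | wk hΓ hΔ _ ih =>
      intro e hG
      refine (ih e hG).wk ?_
      intro x hx
      rcases List.mem_append.mp hx with h1 | h1
      · obtain ⟨X, hX, rfl⟩ := List.mem_map.mp h1
        exact List.mem_append_left _ (List.mem_map_of_mem (hΓ X hX))
      · obtain ⟨X, hX, rfl⟩ := List.mem_map.mp h1
        exact List.mem_append_right _ (List.mem_map_of_mem (hΔ X hX))
  | @cut _ _ Γ Δ C _ _ _ _ _ _ _ ih1 ih2 =>
      intro e hG
      refine DerivesI.cut (C := (tr R (C.subst (ren e))).imp R) (.impR (ih2 e hG)) ?_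
      exact (ih1 e hG).exchange.wk
        (by intro x hx; simp only [List.map_cons, List.cons_append, List.mem_cons, List.mem_append] at hx ⊢; tauto)
  | negL _ _ ih =>
      intro e hG
      exact (ih e hG).exchange
  | @negR _ _ Γ Δ A _ _ _ ih =>
      intro e hG
      refine DerivesI.unexchange ?_
      refine DerivesI.mpCtx (A := (tr R (A.subst (ren e))).imp R)
        (List.mem_cons_self) ?_
      exact .impR ((ih e hG).wk
        (by intro x hx; simp only [List.map_cons, List.cons_append, List.mem_cons, List.mem_append] at hx ⊢; tauto))
  | @impL _ _ Γ Δ A B _ _ _ _ _ _ ih1 ih2 =>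
      intro e hG
      simp only [List.map_cons, List.cons_append, Fml.subst, tr]
      refine DerivesI.cut (C := (tr R (A.subst (ren e))).imp R) ?_ ?_
      · refine .impR ?_
        refine DerivesI.cut (C := tr R (B.subst (ren e)))
          (DerivesI.mpCtx (A := tr R (A.subst (ren e)))
            (by simp) (.axm (by simp))) ?_
        exact (ih2 e hG).wk
          (by intro x hx
              simp only [List.map_cons, List.cons_append, List.mem_cons,
                List.mem_append] at hx ⊢
              tauto)
      · exact (ih1 e hG).exchange.wk
          (by intro x hx; simp only [List.map_cons, List.cons_append, List.mem_cons, List.mem_append] at hx ⊢; tauto)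
  | @impR _ _ Γ Δ A B _ _ _ ih =>
      intro e hG
      refine DerivesI.unexchange ?_
      simp only [Fml.subst, tr]
      refine DerivesI.mpCtx
        (A := (tr R (A.subst (ren e))).imp (tr R (B.subst (ren e))))
        (List.mem_cons_self) ?_
      refine .impR ?_
      refine DerivesI.cut (C := R) ?_ ((efq R B e hG).wkS (by simp))
      refine DerivesI.cut (C := (tr R (B.subst (ren e))).imp R) ?_ ?_
      · refine .impR ?_
        refine DerivesI.mpCtx
          (A := (tr R (A.subst (ren e))).imp (tr R (B.subst (ren e))))
          (by simp) ?_
        exact .impR (.axm (by simp))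
      · refine (ih e hG).wk ?_
        intro x hx
        simp only [List.map_cons, List.cons_append, List.mem_cons, List.mem_append] at hx ⊢
        tauto
  | andL₁ _ _ ih =>
      intro e hG
      exact .andL₁ (ih e hG)
  | andL₂ _ _ ih =>
      intro e hG
      exact .andL₂ (ih e hG)
  | @andR _ _ Γ Δ A B _ _ _ _ _ _ ih1 ih2 =>
      intro e hG
      refine DerivesI.unexchange ?_
      simp only [Fml.subst, tr]
      refine DerivesI.cut (C := (tr R (A.subst (ren e))).imp R) ?_ ?_
      · refine .impR ?_
        refine DerivesI.cut (C := (tr R (B.subst (ren e))).imp R) ?_ ?_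
        · refine .impR ?_
          refine DerivesI.mpCtx
            (A := (tr R (A.subst (ren e))).and (tr R (B.subst (ren e))))
            (by simp) ?_
          exact .andR (.axm (by simp)) (.axm (by simp))
        · exact (ih2 e hG).exchange.wk
            (by intro x hx; simp only [List.map_cons, List.cons_append, List.mem_cons, List.mem_append] at hx ⊢; tauto)
      · exact (ih1 e hG).exchange.wk
          (by intro x hx; simp only [List.map_cons, List.cons_append, List.mem_cons, List.mem_append] at hx ⊢; tauto)
  | orL _ _ _ _ ih1 ih2 =>
      intro e hG
      exact .orL (ih1 e hG) (ih2 e hG)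
  | @orR₁ _ _ Γ Δ A B _ _ _ ih =>
      intro e hG
      refine DerivesI.unexchange ?_
      simp only [Fml.subst, tr]
      refine DerivesI.cut (C := (tr R (A.subst (ren e))).imp R) ?_ ?_
      · refine .impR ?_
        refine DerivesI.mpCtx
          (A := (tr R (A.subst (ren e))).or (tr R (B.subst (ren e))))
          (by simp) ?_
        exact .orR₁ (.axm (by simp))
      · exact (ih e hG).exchange.wk
          (by intro x hx; simp only [List.map_cons, List.cons_append, List.mem_cons, List.mem_append] at hx ⊢; tauto)
  | @orR₂ _ _ Γ Δ A B _ _ _ ih =>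
      intro e hG
      refine DerivesI.unexchange ?_
      simp only [Fml.subst, tr]
      refine DerivesI.cut (C := (tr R (B.subst (ren e))).imp R) ?_ ?_
      · refine .impR ?_
        refine DerivesI.mpCtx
          (A := (tr R (A.subst (ren e))).or (tr R (B.subst (ren e))))
          (by simp) ?_
        exact .orR₂ (.axm (by simp))
      · exact (ih e hG).exchange.wk
          (by intro x hx; simp only [List.map_cons, List.cons_append, List.mem_cons, List.mem_append] at hx ⊢; tauto)
  | @allL _ _ Γ Δ A t _ _ _ ih =>
      intro e hG
      simp only [List.map_cons, List.cons_append, Fml.subst, tr]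
      refine DerivesI.allL (t := t.subst (ren e)) ?_
      rw [dneg_subst0, shift_subst0, tr_subst0, shift_subst0, ← subst0_subst]
      refine DerivesI.mpCtx
        (A := (tr R ((A.subst0 t).subst (ren e))).imp R) (by simp [dneg]) ?_
      refine .impR ?_
      refine (ih e hG).wk ?_
      intro x hx
      simp only [List.map_cons, List.cons_append, List.mem_cons, List.mem_append] at hx ⊢
      tauto
  | @allR _ _ Γ Δ A a _ _ ha hΓ hΔ _ ih =>
      intro e hG
      obtain ⟨c, hc1, hc2, hG'⟩ := hG.fresh_update a
      have hmapΓ : Γ.map (fun B => tr R (B.subst (ren (Function.update e a c))))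
          = Γ.map (fun B => tr R (B.subst (ren e))) := by
        apply List.map_congr_left
        intro B hB
        rw [ren_update_eq B e c (hΓ B hB)]
      have hmapΔ : Δ.map (fun D => (tr R (D.subst (ren (Function.update e a c)))).imp R)
          = Δ.map (fun D => (tr R (D.subst (ren e))).imp R) := by
        apply List.map_congr_left
        intro B hB
        rw [ren_update_eq B e c (hΔ B hB)]
      have hkey : (A.subst0 (.var a)).subst (ren (Function.update e a c))
          = (A.subst (liftSub (ren e))).subst0 (.var c) :=
        subst0_var_update A e a c ha
      have ih' := ih (Function.update e a c) hG'
      rw [List.map_cons, hmapΓ, hmapΔ, hkey] at ih'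
      refine DerivesI.unexchange ?_
      refine DerivesI.mpCtx
        (A := tr R ((Fml.all A).subst (ren e))) (List.mem_cons_self) ?_
      simp only [Fml.subst, tr]
      refine DerivesI.allR (a := c) ?_ ?_ ?_
      · intro hmem
        have : c ∈ Set.range e ∪ R.fv := fv_tr_ren_subset R (.all A) e hmem
        rcases this with h | h
        · exact hc1 h
        · exact hc2 h
      · intro B hB
        rcases List.mem_cons.mp hB with rfl | hB
        · intro hmem
          rcases hmem with hm | hm
          · have : c ∈ Set.range e ∪ R.fv := fv_tr_ren_subset R (.all A) e hm
            rcases this with h | h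
            · exact hc1 h
            · exact hc2 h
          · exact hc2 hm
        · intro hmem
          have : c ∈ Set.range e ∪ R.fv := fv_ctx_subset R e Γ Δ B hB hmem
          rcases this with h | h
          · exact hc1 h
          · exact hc2 h
      · rw [dneg_subst0, shift_subst0, tr_subst0, shift_subst0]
        refine .impR ?_
        refine ih'.exchange.wk ?_
        intro x hx
        simp only [List.map_cons, List.cons_append, List.mem_cons, List.mem_append] at hx ⊢
        tauto
  | @exL _ _ Γ Δ A a _ _ ha hΓ hΔ _ ih =>
      intro e hG
      obtain ⟨c, hc1, hc2, hG'⟩ := hG.fresh_update a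
      have hmapΓ : Γ.map (fun B => tr R (B.subst (ren (Function.update e a c))))
          = Γ.map (fun B => tr R (B.subst (ren e))) := by
        apply List.map_congr_left
        intro B hB
        rw [ren_update_eq B e c (hΓ B hB)]
      have hmapΔ : Δ.map (fun D => (tr R (D.subst (ren (Function.update e a c)))).imp R)
          = Δ.map (fun D => (tr R (D.subst (ren e))).imp R) := by
        apply List.map_congr_left
        intro B hB
        rw [ren_update_eq B e c (hΔ B hB)]
      have hkey : (A.subst0 (.var a)).subst (ren (Function.update e a c))
          = (A.subst (liftSub (ren e))).subst0 (.var c) :=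
        subst0_var_update A e a c ha
      have ih' := ih (Function.update e a c) hG'
      rw [List.map_cons, hmapΓ, hmapΔ, hkey] at ih'
      simp only [List.map_cons, List.cons_append, Fml.subst, tr]
      refine DerivesI.exL (a := c) ?_ ?_ ?_ ?_
      · intro hmem
        have : c ∈ Set.range e ∪ R.fv := fv_tr_ren_subset R (.ex A) e hmem
        rcases this with h | h
        · exact hc1 h
        · exact hc2 h
      · intro B hB
        intro hmem
        have : c ∈ Set.range e ∪ R.fv := fv_ctx_subset R e Γ Δ B hB hmem
        rcases this with h | h
        · exact hc1 h
        · exact hc2 h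
      · intro B hB
        cases hB
        intro hmem
        exact hc2 hmem
      · rw [tr_subst0, shift_subst0]
        exact ih'
  | @exR _ _ Γ Δ A t _ _ _ ih =>
      intro e hG
      refine DerivesI.unexchange ?_
      refine DerivesI.cut (C := (tr R ((A.subst0 t).subst (ren e))).imp R) ?_ ?_
      · refine .impR ?_
        refine DerivesI.mpCtx (A := tr R ((Fml.ex A).subst (ren e))) (by simp) ?_
        simp only [Fml.subst, tr]
        refine DerivesI.exR (t := t.subst (ren e)) ?_
        rw [tr_subst0, shift_subst0, ← subst0_subst]
        exact .axm (by simp)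
      · exact (ih e hG).exchange.wk
          (by intro x hx; simp only [List.map_cons, List.cons_append, List.mem_cons, List.mem_append] at hx ⊢; tauto)
  | @conjL _ _ Γ Δ ι f _ i _ _ ih =>
      intro e hG
      simp only [List.map_cons, List.cons_append, Fml.subst, tr]
      refine DerivesI.conjL i ?_
      refine DerivesI.mpCtx (A := (tr R ((f i).subst (ren e))).imp R) (by simp [dneg]) ?_
      refine .impR ?_
      refine (ih e hG).wk ?_
      intro x hx
      simp only [List.map_cons, List.cons_append, List.mem_cons, List.mem_append] at hx ⊢
      tauto
  | @conjR _ _ Γ Δ ι f β _ _ ih =>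
      intro e hG
      refine DerivesI.unexchange ?_
      refine DerivesI.mpCtx (A := tr R ((Fml.conj ι f).subst (ren e)))
        (List.mem_cons_self) ?_
      simp only [Fml.subst, tr]
      refine DerivesI.conjR fun i => ?_
      refine .impR ?_
      exact (ih i e hG).exchange.wk
        (by intro x hx; simp only [List.map_cons, List.cons_append, List.mem_cons, List.mem_append] at hx ⊢; tauto)
  | @disjL _ _ Γ Δ ι f β _ _ ih =>
      intro e hG
      simp only [List.map_cons, List.cons_append, Fml.subst, tr]
      refine DerivesI.disjL fun o => ?_
      cases o with
      | none => exact .ax0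
      | some i => exact ih i e hG
  | @disjR _ _ Γ Δ ι f _ i _ _ ih =>
      intro e hG
      refine DerivesI.unexchange ?_
      refine DerivesI.cut (C := (tr R ((f i).subst (ren e))).imp R) ?_ ?_
      · refine .impR ?_
        refine DerivesI.mpCtx (A := tr R ((Fml.disj ι f).subst (ren e))) (by simp) ?_
        simp only [Fml.subst, tr]
        exact DerivesI.disjR (some i) (.axm (by simp))
      · exact (ih e hG).exchange.wk
          (by intro x hx; simp only [List.map_cons, List.cons_append, List.mem_cons, List.mem_append] at hx ⊢; tauto)


/-! ### Classical inversion via cut -/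

lemma inv_all {Γ : List Fml} {A : Fml} (t : Tm) (h : Derivable Γ [.all A]) :
    Derivable Γ [A.subst0 t] := by
  refine Derivable.cutF (C := .all A) ?_ ?_
  · exact h.wk (fun x hx => hx) (fun x hx => by
      rw [List.mem_singleton.mp hx]; exact List.mem_cons_self)
  · refine ⟨1, 0, Derives.allL (t := t) (β := 0) zero_lt_one ?_⟩
    exact Derives.ax (A := A.subst0 t) (List.mem_cons_self) (List.mem_singleton_self _)

lemma inv_conj {Γ : List Fml} {ι : Type} {f : ι → Fml} (i : ι)
    (h : Derivable Γ [.conj ι f]) : Derivable Γ [f i] := by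
  refine Derivable.cutF (C := .conj ι f) ?_ ?_
  · exact h.wk (fun x hx => hx) (fun x hx => by
      rw [List.mem_singleton.mp hx]; exact List.mem_cons_self)
  · refine ⟨1, 0, Derives.conjL i (β := 0) zero_lt_one ?_⟩
    exact Derives.ax (A := f i) (List.mem_cons_self) (List.mem_singleton_self _)

/-! ### The even/odd renaming -/

def e0 : ℕ → ℕ := fun n => if Even n then n else 2 * n + 1

lemma good_e0 {R : Fml} (heven : ∀ n ∈ R.fv, Even n) : Good e0 R := by
  refine Set.infinite_of_injective_forall_mem (f := fun k : ℕ => 4 * k + 1) ?_ ?_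
  · intro a b hab
    simpa using hab
  · intro k
    show (4 * k + 1 ∉ Set.range e0) ∧ (4 * k + 1 ∉ R.fv)
    constructor
    · rintro ⟨m, hm⟩
      by_cases hme : Even m
      · simp only [e0, if_pos hme] at hm
        rw [Nat.even_iff] at hme
        omega
      · simp only [e0, if_neg hme] at hm
        rw [Nat.not_even_iff] at hme
        omega
    · intro hmem
      have := heven _ hmem
      rw [Nat.even_iff] at this
      omega

lemma closed_subst (A : Fml) (σ : ℕ → Tm) (h : A.fv = ∅) : A.subst σ = A := by
  rw [subst_congr A σ (fun n => .var n) (fun n hn => by rw [h] at hn; cases hn), subst_id]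

lemma subst_e0_fixed (A : Fml) (heven : ∀ n ∈ A.fv, Even n) : A.subst (ren e0) = A := by
  rw [subst_congr A (ren e0) (fun n => .var n) ?_, subst_id]
  intro n hn
  simp [ren, e0, if_pos (heven n hn)]

lemma isGeom_subst {X : Fml} (hX : IsGeom X) : ∀ σ : ℕ → Tm, IsGeom (X.subst σ) := by
  induction hX with
  | atom p ts => intro σ; exact .atom _ _
  | and hA hB ihA ihB => intro σ; exact .and (ihA σ) (ihB σ)
  | or hA hB ihA ihB => intro σ; exact .or (ihA σ) (ihB σ)
  | ex hA ihA => intro σ; exact .ex (ihA (liftSub σ))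
  | disj hf ih => intro σ; exact .disj fun i => ih i σ

lemma fv_consSub_subset (H0 : Fml) (σ : ℕ → Tm) (c : ℕ) :
    (H0.subst (consSub (.var c) σ)).fv ⊆ (Fml.all (H0.subst (liftSub σ))).fv ∪ {c} := by
  intro n hn
  rw [mem_fv_subst] at hn
  obtain ⟨m, hm, hn⟩ := hn
  cases m with
  | zero =>
      right
      exact hn
  | succ k =>
      left
      show n + 1 ∈ (H0.subst (liftSub σ)).fv
      rw [mem_fv_subst]
      refine ⟨k + 1, hm, ?_⟩
      have hn' : n ∈ (σ k).fv := hn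
      cases hσ : σ k with
      | var j =>
          rw [hσ] at hn'
          have : n = j := hn'
          subst this
          simp [liftSub, hσ, Tm.fv]

/-! ### Putting it together -/

lemma mainT (ι : Type) (T : ι → Fml) (hTg : ∀ i, IsGeomImp (T i))
    (hTc : (Fml.conj ι T).fv = ∅) {R D : Fml}
    (heven : ∀ n ∈ R.fv, Even n) (hD : D.subst (ren e0) = D)
    (h : Derivable [Fml.conj ι T] [D]) :
    DerivesI ((tr R D).imp R :: [Fml.conj ι T]) (some R) := by
  have hGood : Good e0 R := good_e0 heven
  obtain ⟨α, ρ, hd⟩ := h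
  have hmain := main R hd e0 hGood
  simp only [List.map_cons, List.map_nil, List.cons_append, List.nil_append] at hmain
  rw [closed_subst _ _ hTc, hD] at hmain
  have d1 : DerivesI [Fml.conj ι T] (some (tr R (Fml.conj ι T))) := by
    have := geomImp R (IsGeomImp.conj hTg) e0 hGood
    rwa [closed_subst _ _ hTc] at this
  refine (d1.wkS (by simp)).cut ?_
  refine hmain.wk ?_
  intro x hx
  simp only [List.mem_cons, List.mem_singleton] at hx ⊢
  tauto

lemma peel (ι : Type) (T : ι → Fml) (hTg : ∀ i, IsGeomImp (T i))
    (hTc : (Fml.conj ι T).fv = ∅) {H : Fml} (hH : IsGeomImp H) :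
    ∀ σ : ℕ → Tm, (H.subst σ).fv.Finite → (∀ n ∈ (H.subst σ).fv, Even n) →
      Derivable [Fml.conj ι T] [H.subst σ] →
      DerivesI [Fml.conj ι T] (some (H.subst σ)) := by
  induction hH with
  | @base X hX =>
      intro σ hfin heven hder
      have hGood : Good e0 (X.subst σ) := good_e0 heven
      have hfix : (X.subst σ).subst (ren e0) = X.subst σ := subst_e0_fixed _ heven
      have res := mainT ι T hTg hTc (R := X.subst σ) (D := X.subst σ) heven hfix hder
      refine DerivesI.cut ?_ res
      refine .impR ?_
      have g := geomOut (X.subst σ) (isGeom_subst hX σ) e0 hGood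
      rw [hfix] at g
      exact (g.wkS (by simp)).cut (.orL .ax0 .ax0)
  | @neg X hX =>
      intro σ hfin heven hder
      simp only [Fml.subst] at heven hder ⊢
      set A' := X.subst σ with hA'
      set R : Fml := .neg A' with hR
      have hevenA : ∀ n ∈ A'.fv, Even n := heven
      have hevenR : ∀ n ∈ R.fv, Even n := heven
      have hGood : Good e0 R := good_e0 hevenR
      have hfixR : R.subst (ren e0) = R := subst_e0_fixed _ hevenR
      have hfixA : A'.subst (ren e0) = A' := subst_e0_fixed _ hevenA
      have res := mainT ι T hTg hTc (R := R) (D := R) hevenR hfixR hder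
      refine DerivesI.negR ?_
      have dA : DerivesI (A' :: [Fml.conj ι T]) (some (tr R A')) := by
        have g := geomIn R (isGeom_subst hX σ) e0 hGood
        rw [hfixA] at g
        exact g.wkS (by simp)
      have dH : DerivesI (A' :: [Fml.conj ι T]) (some ((tr R R).imp R)) := by
        refine .impR ?_
        show DerivesI ((tr R A').imp R :: A' :: [Fml.conj ι T]) (some R)
        exact DerivesI.mpCtx (by simp) (dA.wk1)
      have sR : DerivesI (A' :: [Fml.conj ι T]) (some R) := by
        refine dH.cut (res.wk ?_)
        intro x hx
        simp only [List.mem_cons, List.mem_singleton] at hx ⊢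
        tauto
      exact sR.cut (DerivesI.negL (.axm (by simp)))
  | @imp A B hA hB =>
      intro σ hfin heven hder
      simp only [Fml.subst] at heven hder ⊢
      set A' := A.subst σ with hA'
      set B' := B.subst σ with hB'
      have hevenA : ∀ n ∈ A'.fv, Even n := fun n hn => heven n (Set.mem_union_left _ hn)
      have hevenB : ∀ n ∈ B'.fv, Even n := fun n hn => heven n (Set.mem_union_right _ hn)
      have hGood : Good e0 B' := good_e0 hevenB
      have hfixA : A'.subst (ren e0) = A' := subst_e0_fixed _ hevenA
      have hfixB : B'.subst (ren e0) = B' := subst_e0_fixed _ hevenB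
      have hfixD : (Fml.imp A' B').subst (ren e0) = .imp A' B' := subst_e0_fixed _ heven
      have res := mainT ι T hTg hTc (R := B') (D := .imp A' B') hevenB hfixD hder
      refine DerivesI.impR ?_
      have dA : DerivesI (A' :: [Fml.conj ι T]) (some (tr B' A')) := by
        have g := geomIn B' (isGeom_subst hA σ) e0 hGood
        rw [hfixA] at g
        exact g.wkS (by simp)
      have dH : DerivesI (A' :: [Fml.conj ι T]) (some ((tr B' (Fml.imp A' B')).imp B')) := by
        refine .impR ?_
        show DerivesI ((tr B' A').imp (tr B' B') :: A' :: [Fml.conj ι T]) (some B')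
        refine (DerivesI.mpCtx (A := tr B' A') (B := tr B' B') (by simp) (dA.wk1)).cut ?_
        have g := geomOut B' (isGeom_subst hB σ) e0 hGood
        rw [hfixB] at g
        exact (g.wkS (by simp)).cut (.orL .ax0 .ax0)
      refine dH.cut (res.wk ?_)
      intro x hx
      simp only [List.mem_cons, List.mem_singleton] at hx ⊢
      tauto
  | @all H0 hH0 ih =>
      intro σ hfin heven hder
      simp only [Fml.subst] at hfin heven hder ⊢
      obtain ⟨c, hc⟩ : ∃ c, Even c ∧ c ∉ (Fml.all (H0.subst (liftSub σ))).fv := by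
        have hev : ({n : ℕ | Even n}).Infinite := by
          refine Set.infinite_of_injective_forall_mem (f := fun k : ℕ => 2 * k) ?_ ?_
          · intro a b hab; simpa using hab
          · intro k; exact ⟨k, two_mul k⟩
        obtain ⟨c, hc⟩ := (hev.diff hfin).nonempty
        exact ⟨c, hc.1, hc.2⟩
      have key : (H0.subst (liftSub σ)).subst0 (.var c) = H0.subst (consSub (.var c) σ) :=
        subst_liftSub_subst0 _ _ _
      have h1 : Derivable [Fml.conj ι T] [H0.subst (consSub (.var c) σ)] := by
        have := inv_all (t := .var c) hder
        rwa [key] at this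
      have hsub := fv_consSub_subset H0 σ c
      have hfin' : (H0.subst (consSub (.var c) σ)).fv.Finite :=
        Set.Finite.subset (hfin.union (Set.finite_singleton c)) hsub
      have heven' : ∀ n ∈ (H0.subst (consSub (.var c) σ)).fv, Even n := by
        intro n hn
        rcases hsub hn with h | h
        · exact heven n h
        · rw [h]; exact hc.1
      have dI := ih (consSub (.var c) σ) hfin' heven' h1
      refine DerivesI.allR (a := c) hc.2 ?_ ?_
      · intro B hB
        rw [List.mem_singleton.mp hB]
        intro hmem
        rw [hTc] at hmem
        cases hmem
      · rw [key]
        exact dI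
  | @conj ι' f hf ih =>
      intro σ hfin heven hder
      simp only [Fml.subst] at hfin heven hder ⊢
      refine DerivesI.conjR fun j => ?_
      have hj : Derivable [Fml.conj ι T] [(f j).subst σ] := inv_conj j hder
      have hsub : ((f j).subst σ).fv ⊆ (Fml.conj ι' fun i => (f i).subst σ).fv :=
        fun n hn => ⟨j, hn⟩
      exact ih j σ (hfin.subset hsub) (fun n hn => heven n (hsub hn)) hj

end Barr

/-- Barr's theorem, proof-theoretic form: if `T` is an `∞`-geometric theory (a set
of sentences that are `∞`-geometric implications) and `G` an `∞`-geometric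
implication (a sentence) classically derivable from `T` in `L_{∞ω}` (i.e. the
sequent `⋀T ⊢ G` is classically derivable), then `G` is intuitionistically
derivable from `T`. -/
theorem barr_theorem (ι : Type) (T : ι → Fml)
    (hT : ∀ i, IsGeomImp (T i) ∧ (T i).Closed)
    (G : Fml) (hG : IsGeomImp G) (hGc : G.Closed)
    (h : Derivable [Fml.conj ι T] [G]) :
    DerivesI [Fml.conj ι T] (some G) := by
  have hTc : (Fml.conj ι T).fv = ∅ := by
    ext n
    simp only [Fml.fv, Set.mem_setOf_eq, Set.mem_empty_iff_false, iff_false]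
    rintro ⟨i, hi⟩
    rw [(hT i).2] at hi
    cases hi
  have hid : G.subst (fun n => .var n) = G := Barr.subst_id G
  have := Barr.peel ι T (fun i => (hT i).1) hTc hG (fun n => .var n) ?_ ?_ ?_
  · rwa [hid] at this
  · rw [hid, hGc]; exact Set.finite_empty
  · intro n hn
    rw [hid, hGc] at hn
    cases hn
  · rwa [hid]
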